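/- Let f be differentiable with minimum f*, ν ∈ [0,1], σ, L₀, L₁ ≥ 0 with σ = 0 when ν = 0, and suppose ‖∇f(x)‖ ≤ √(σ² + L₀^{2/(1+ν)}(f(x)-f*)^{2ν/(1+ν)}) + L₁(f(x)-f*) for all x. Define β = min{(σ^{1+ν}/L₀)^{1/ν}, σ/L₁} and h(x) = (β + f(x) - f*)^{1/(1+ν)}. Then ‖∇h(x)‖ ≤ (2/(1+ν)) L₀^{1/(1+ν)} + (1/(1+ν)) L₁ h(x) for all x. -/

import Mathlib

open Real

theorem holder_smooth_grad_h_bound {d : ℕ}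
    (f : EuclideanSpace ℝ (Fin d) → ℝ) (xstar : EuclideanSpace ℝ (Fin d))
    (ν σ L₀ L₁ β : ℝ)
    (hf : Differentiable ℝ f) (hmin : ∀ y, f xstar ≤ f y)
    (hν : ν ∈ Set.Icc (0 : ℝ) 1) (hσ : 0 ≤ σ) (hL₀ : 0 < L₀) (hL₁ : 0 < L₁)
    (hν0 : ν = 0 → σ = 0)
    (hgrad : ∀ x, ‖gradient f x‖ ≤
      Real.sqrt (σ ^ 2 + L₀ ^ (2 / (1 + ν)) * (f x - f xstar) ^ (2 * ν / (1 + ν))) +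
        L₁ * (f x - f xstar))
    (hβ : β = min ((σ ^ (1 + ν) / L₀) ^ (1 / ν)) (σ / L₁))
    (h : EuclideanSpace ℝ (Fin d) → ℝ)
    (hh : ∀ x, h x = (β + f x - f xstar) ^ (1 / (1 + ν))) :
    ∀ x, ‖gradient h x‖ ≤
      2 / (1 + ν) * L₀ ^ (1 / (1 + ν)) + 1 / (1 + ν) * L₁ * h x := by
  intro x
  have hν0' : (0:ℝ) ≤ ν := hν.1
  have h1ν : (0:ℝ) < 1 + ν := by linarith
  set p : ℝ := 1 / (1 + ν) with hp
  have hp0 : 0 < p := by positivity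
  have hp1 : p ≤ 1 := by
    rw [hp, div_le_one h1ν]; linarith
  have h1p : 1 - p = ν / (1 + ν) := by
    rw [hp]; field_simp; ring
  have hΔ : 0 ≤ f x - f xstar := sub_nonneg.2 (hmin x)
  have hβnn : 0 ≤ β := by
    rw [hβ]
    exact le_min (Real.rpow_nonneg (by positivity) _) (by positivity)
  set s : ℝ := β + (f x - f xstar) with hs_def
  have hseq : β + f x - f xstar = s := by rw [hs_def]; ring
  have hs0 : 0 ≤ s := by positivity
  have hhx : h x = s ^ p := by rw [hh x, hseq]
  have hLp : 0 ≤ L₀ ^ p := Real.rpow_nonneg hL₀.le _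
  rcases eq_or_lt_of_le hs0 with hsz | hs
  · -- degenerate case : s = 0
    have hx0 : h x = 0 := by
      rw [hhx, ← hsz, Real.zero_rpow hp0.ne']
    have hloc : IsLocalMin h x := by
      apply Filter.Eventually.of_forall
      intro y
      rw [hx0, hh y]
      have : 0 ≤ β + f y - f xstar := by
        have := sub_nonneg.2 (hmin y); linarith
      exact Real.rpow_nonneg this _
    have hfd : fderiv ℝ h x = 0 := hloc.fderiv_eq_zero
    have : gradient h x = 0 := by
      simp [gradient, hfd]
    rw [this, hx0, norm_zero]
    positivity
  · -- main case : 0 < s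
    -- the scalar outer function
    have hg1 : HasDerivAt (fun u : ℝ => u ^ p) (p * s ^ (p - 1)) (β + f x - f xstar) := by
      rw [hseq]; exact Real.hasDerivAt_rpow_const (Or.inl hs.ne')
    have hg2 : HasDerivAt (fun t : ℝ => β + t - f xstar) 1 (f x) := by
      simpa using ((hasDerivAt_id (f x)).const_add β).sub_const (f xstar)
    have hg : HasDerivAt (fun t : ℝ => (β + t - f xstar) ^ p) (p * s ^ (p - 1)) (f x) := by
      have := hg1.comp (f x) hg2
      rw [mul_one] at this
      exact this
    have hfg : HasFDerivAt f
        ((InnerProductSpace.toDual ℝ (EuclideanSpace ℝ (Fin d))) (gradient f x)) x :=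
      ((hf x).hasGradientAt).hasFDerivAt
    have hFh : HasFDerivAt h
        ((InnerProductSpace.toDual ℝ (EuclideanSpace ℝ (Fin d)))
          ((p * s ^ (p - 1)) • gradient f x)) x := by
      have hcomp := hg.comp_hasFDerivAt x hfg
      have heq : (fun t : ℝ => (β + t - f xstar) ^ p) ∘ f = h := by
        funext y; simp [Function.comp, hh y, hp]
      rw [heq] at hcomp
      simpa [map_smul] using hcomp
    have HG : HasGradientAt h ((p * s ^ (p - 1)) • gradient f x) x :=
      (hasGradientAt_iff_hasFDerivAt).2 hFh
    rw [HG.gradient, norm_smul]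
    set E : ℝ := s ^ (p - 1) with hE
    have hE0 : 0 < E := Real.rpow_pos_of_pos hs _
    have hcnn : 0 ≤ p * E := by positivity
    rw [Real.norm_eq_abs, abs_of_nonneg hcnn]
    set Δ : ℝ := f x - f xstar with hΔdef
    set T : ℝ := L₀ ^ p * Δ ^ (1 - p) with hT
    have hTnn : 0 ≤ T := by
      exact mul_nonneg hLp (Real.rpow_nonneg hΔ _)
    -- step 1 : ‖∇f x‖ ≤ σ + T + L₁ Δ
    have hGb : ‖gradient f x‖ ≤ σ + T + L₁ * Δ := by
      have h1 : Real.sqrt (σ ^ 2 + L₀ ^ (2 / (1 + ν)) * Δ ^ (2 * ν / (1 + ν)))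
          ≤ σ + T := by
        have hTsq : T ^ 2 = L₀ ^ (2 / (1 + ν)) * Δ ^ (2 * ν / (1 + ν)) := by
          rw [hT, mul_pow, ← Real.rpow_natCast (L₀ ^ p) 2,
            ← Real.rpow_natCast (Δ ^ (1 - p)) 2,
            ← Real.rpow_mul hL₀.le, ← Real.rpow_mul hΔ]
          have e1 : p * (2:ℕ) = 2 / (1 + ν) := by
            push_cast; rw [hp]; field_simp
          have e2 : (1 - p) * (2:ℕ) = 2 * ν / (1 + ν) := by
            push_cast; rw [h1p]; field_simp
          rw [e1, e2]
        calc Real.sqrt (σ ^ 2 + L₀ ^ (2 / (1 + ν)) * Δ ^ (2 * ν / (1 + ν)))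
            = Real.sqrt (σ ^ 2 + T ^ 2) := by rw [hTsq]
          _ ≤ Real.sqrt ((σ + T) ^ 2) := by
              apply Real.sqrt_le_sqrt; nlinarith
          _ = σ + T := by
              rw [Real.sqrt_sq (by positivity)]
      calc ‖gradient f x‖ ≤ _ := hgrad x
        _ ≤ σ + T + L₁ * Δ := by
            have := h1; simp only [← hΔdef] at this ⊢; linarith
    -- basic rpow facts
    have hΔs : Δ ≤ s := by rw [hs_def]; linarith
    have hss : s ^ (1 - p) * E = 1 := by
      rw [hE, ← Real.rpow_add hs]
      norm_num
    have hsE : s * E = s ^ p := by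
      rw [hE]
      nth_rewrite 1 [← Real.rpow_one s]
      rw [← Real.rpow_add hs]
      norm_num
    have hTE : T * E ≤ L₀ ^ p := by
      have hmono : Δ ^ (1 - p) ≤ s ^ (1 - p) :=
        Real.rpow_le_rpow hΔ hΔs (by linarith)
      calc T * E = L₀ ^ p * (Δ ^ (1 - p) * E) := by rw [hT]; ring
        _ ≤ L₀ ^ p * (s ^ (1 - p) * E) := by
            apply mul_le_mul_of_nonneg_left _ hLp
            exact mul_le_mul_of_nonneg_right hmono hE0.le
        _ = L₀ ^ p := by rw [hss, mul_one]
    have hΔE : L₁ * Δ * E ≤ L₁ * s ^ p := by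
      rw [← hsE]
      have : L₁ * Δ ≤ L₁ * s := by nlinarith
      calc L₁ * Δ * E ≤ L₁ * s * E := mul_le_mul_of_nonneg_right this hE0.le
        _ = L₁ * (s * E) := by ring
      -- note : L₁ * (s*E) vs L₁ * s * E shape
    -- σ bound, by cases on the min
    have hkey : σ * E + T * E + L₁ * Δ * E ≤ 2 * L₀ ^ p + L₁ * s ^ p := by
      rcases min_cases ((σ ^ (1 + ν) / L₀) ^ (1 / ν)) (σ / L₁) with ⟨hb, hle⟩ | ⟨hb, hle⟩
      · -- β = (σ^{1+ν}/L₀)^{1/ν}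
        have hβeq : β = (σ ^ (1 + ν) / L₀) ^ (1 / ν) := by rw [hβ, hb]
        have hνpos : 0 < ν := by
          rcases eq_or_lt_of_le hν0' with hz | hz
          · exfalso
            have hσ0 : σ = 0 := hν0 hz.symm
            rw [hσ0, ← hz] at hle
            norm_num at hle
          · exact hz
        have hβν : β ^ ν = σ ^ (1 + ν) / L₀ := by
          rw [hβeq, ← Real.rpow_mul (by positivity),
            one_div_mul_cancel hνpos.ne', Real.rpow_one]
        have hσeq : σ = L₀ ^ p * β ^ (1 - p) := by
          have h1 : σ ^ (1 + ν) = L₀ * β ^ ν := by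
            rw [hβν]; field_simp
          have h2 : (σ ^ (1 + ν)) ^ p = σ := by
            rw [← Real.rpow_mul hσ]
            have hmul : (1 + ν) * p = 1 := by rw [hp]; field_simp
            rw [hmul, Real.rpow_one]
          rw [← h2, h1, Real.mul_rpow hL₀.le (Real.rpow_nonneg hβnn _),
            ← Real.rpow_mul hβnn]
          congr 1
          rw [h1p, hp]
          ring
        have hσE : σ * E ≤ L₀ ^ p := by
          have hmono : β ^ (1 - p) ≤ s ^ (1 - p) :=
            Real.rpow_le_rpow hβnn (by rw [hs_def]; linarith) (by linarith)
          calc σ * E = L₀ ^ p * (β ^ (1 - p) * E) := by rw [hσeq]; ring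
            _ ≤ L₀ ^ p * (s ^ (1 - p) * E) := by
                apply mul_le_mul_of_nonneg_left _ hLp
                exact mul_le_mul_of_nonneg_right hmono hE0.le
            _ = L₀ ^ p := by rw [hss, mul_one]
        linarith
      · -- β = σ / L₁
        have hβeq : β = σ / L₁ := by rw [hβ, hb]
        have hσβ : σ = L₁ * β := by rw [hβeq]; field_simp
        have hcomb : σ * E + L₁ * Δ * E ≤ L₁ * s ^ p := by
          have : σ + L₁ * Δ ≤ L₁ * s :=
            le_of_eq (by rw [hσβ, hs_def]; ring)
          calc σ * E + L₁ * Δ * E = (σ + L₁ * Δ) * E := by ring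
            _ ≤ L₁ * s * E := mul_le_mul_of_nonneg_right this hE0.le
            _ = L₁ * (s * E) := by ring
            _ = L₁ * s ^ p := by rw [hsE]
        linarith
    -- assemble
    have hG0 : 0 ≤ ‖gradient f x‖ := norm_nonneg _
    calc p * E * ‖gradient f x‖
        ≤ p * E * (σ + T + L₁ * Δ) := by
          exact mul_le_mul_of_nonneg_left hGb hcnn
      _ = p * (σ * E + T * E + L₁ * Δ * E) := by ring
      _ ≤ p * (2 * L₀ ^ p + L₁ * s ^ p) := by
          exact mul_le_mul_of_nonneg_left hkey hp0.le
      _ = 2 / (1 + ν) * L₀ ^ p + 1 / (1 + ν) * L₁ * h x := by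
          rw [hhx, hp]; ring
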